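/- Let X have density p on ℝ with T_α(X||Z) < ∞, i.e. ∫ p(x)^α φ(x)^{1-α} dx < ∞ for some α > 1, β = α/(α-1), Z standard normal. Then E e^{tX} · e^{-β t²/2} → 0 as |t| → ∞. -/

import Mathlib

open MeasureTheory Filter

/-- The standard normal density on the real line. -/
noncomputable def stdNormalPDF (x : ℝ) : ℝ :=
  (Real.sqrt (2 * Real.pi))⁻¹ * Real.exp (-x ^ 2 / 2)

open ProbabilityTheory Topology
open scoped ENNReal

lemma stdNormalPDF_eq (x : ℝ) : stdNormalPDF x = gaussianPDFReal 0 1 x := by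
  simp [stdNormalPDF, gaussianPDFReal]

lemma stdNormalPDF_pos (x : ℝ) : 0 < stdNormalPDF x := by
  unfold stdNormalPDF; positivity

lemma measurable_stdNormalPDF : Measurable stdNormalPDF := by
  unfold stdNormalPDF; fun_prop

lemma stdNormalPDF_rpow (y r : ℝ) :
    stdNormalPDF y ^ r = (Real.sqrt (2 * Real.pi))⁻¹ ^ r * Real.exp (-y ^ 2 / 2 * r) := by
  unfold stdNormalPDF
  rw [Real.mul_rpow (by positivity) (Real.exp_pos _).le, Real.exp_mul]

lemma key_identity {β : ℝ} (hβ0 : 0 < β) (p : ℝ → ℝ) (t x : ℝ) :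
    Real.exp (t * x) * p x * Real.exp (-β * t ^ 2 / 2)
      = p x * stdNormalPDF x ^ (-(1 / β)) * stdNormalPDF (x - β * t) ^ (1 / β) := by
  rw [stdNormalPDF_rpow, stdNormalPDF_rpow]
  have hc : (0:ℝ) < (Real.sqrt (2 * Real.pi))⁻¹ := by positivity
  have h1 : (Real.sqrt (2 * Real.pi))⁻¹ ^ (-(1/β)) * (Real.sqrt (2 * Real.pi))⁻¹ ^ (1/β)
      = 1 := by
    rw [← Real.rpow_add hc]; simp
  calc Real.exp (t * x) * p x * Real.exp (-β * t ^ 2 / 2)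
      = p x * (Real.exp (t * x) * Real.exp (-β * t ^ 2 / 2)) := by ring
    _ = p x * (Real.exp (-x ^ 2 / 2 * -(1/β)) * Real.exp (-(x - β*t) ^ 2 / 2 * (1/β))) := by
        rw [← Real.exp_add, ← Real.exp_add]
        congr 1
        congr 1
        field_simp
        ring
    _ = p x * (Real.sqrt (2 * Real.pi))⁻¹ ^ (-(1/β)) * Real.exp (-x ^ 2 / 2 * -(1/β)) *
          ((Real.sqrt (2 * Real.pi))⁻¹ ^ (1/β) * Real.exp (-(x - β*t) ^ 2 / 2 * (1/β))) := by
        rw [show p x * (Real.sqrt (2 * Real.pi))⁻¹ ^ (-(1/β)) * Real.exp (-x ^ 2 / 2 * -(1/β)) *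
          ((Real.sqrt (2 * Real.pi))⁻¹ ^ (1/β) * Real.exp (-(x - β*t) ^ 2 / 2 * (1/β)))
          = p x * ((Real.sqrt (2 * Real.pi))⁻¹ ^ (-(1/β)) * (Real.sqrt (2 * Real.pi))⁻¹ ^ (1/β)) *
            (Real.exp (-x ^ 2 / 2 * -(1/β)) * Real.exp (-(x - β*t) ^ 2 / 2 * (1/β))) from by ring,
          h1]
        ring
    _ = p x * ((Real.sqrt (2 * Real.pi))⁻¹ ^ (-(1/β)) * Real.exp (-x ^ 2 / 2 * -(1/β))) *
          ((Real.sqrt (2 * Real.pi))⁻¹ ^ (1/β) * Real.exp (-(x - β*t) ^ 2 / 2 * (1/β))) := by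
        ring

lemma g_rpow_alpha {α β : ℝ} (hα : 1 < α) (hβ : β = α / (α - 1)) (p : ℝ → ℝ)
    (hp : ∀ x, 0 ≤ p x) (x : ℝ) :
    (p x * stdNormalPDF x ^ (-(1 / β))) ^ α = p x ^ α / stdNormalPDF x ^ (α - 1) := by
  have hφ := stdNormalPDF_pos x
  have hβval : -(1/β) * α = 1 - α := by
    rw [hβ]; field_simp; ring
  rw [Real.mul_rpow (hp x) (by positivity), ← Real.rpow_mul hφ.le, hβval,
    show (1:ℝ) - α = -(α - 1) by ring, Real.rpow_neg hφ.le, div_eq_mul_inv]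

lemma holder_bound {α β : ℝ} (hα : 1 < α) (hβ : β = α / (α - 1)) (p : ℝ → ℝ)
    (hpm : Measurable p) (hp : ∀ x, 0 ≤ p x) (t : ℝ) (S : Set ℝ) :
    ∫⁻ x in S, ENNReal.ofReal (Real.exp (t * x) * p x * Real.exp (-β * t ^ 2 / 2))
      ≤ (∫⁻ x in S, ENNReal.ofReal (p x ^ α / stdNormalPDF x ^ (α - 1))) ^ (1/α)
        * (∫⁻ x in S, ENNReal.ofReal (stdNormalPDF (x - β * t))) ^ (1/β) := by
  have hpq : α.HolderConjugate β := (Real.holderConjugate_iff_eq_conjExponent hα).2 hβ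
  have hβ0 : 0 < β := hpq.symm.pos
  set f : ℝ → ℝ≥0∞ := fun x => ENNReal.ofReal (p x * stdNormalPDF x ^ (-(1/β))) with hf
  set g : ℝ → ℝ≥0∞ := fun x => ENNReal.ofReal (stdNormalPDF (x - β * t)) ^ (1/β) with hg
  have hm1 : Measurable fun y : ℝ => y ^ (-(1/β)) := by measurability
  have hmf : Measurable f := by
    apply Measurable.ennreal_ofReal
    exact hpm.mul (hm1.comp measurable_stdNormalPDF)
  have hmg : Measurable g :=
    ((measurable_stdNormalPDF.comp (measurable_sub_const _)).ennreal_ofReal).pow_const _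
  calc ∫⁻ x in S, ENNReal.ofReal (Real.exp (t * x) * p x * Real.exp (-β * t ^ 2 / 2))
      = ∫⁻ x in S, (f * g) x := by
        refine lintegral_congr fun x => ?_
        rw [key_identity hβ0 p t x]
        simp only [f, g, Pi.mul_apply]
        rw [ENNReal.ofReal_mul (mul_nonneg (hp x) (Real.rpow_nonneg (stdNormalPDF_pos x).le _)),
          ENNReal.ofReal_rpow_of_pos (stdNormalPDF_pos _)]
    _ ≤ (∫⁻ x in S, f x ^ α) ^ (1/α) * (∫⁻ x in S, g x ^ β) ^ (1/β) :=
        ENNReal.lintegral_mul_le_Lp_mul_Lq _ hpq hmf.aemeasurable hmg.aemeasurable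
    _ = (∫⁻ x in S, ENNReal.ofReal (p x ^ α / stdNormalPDF x ^ (α - 1))) ^ (1/α)
        * (∫⁻ x in S, ENNReal.ofReal (stdNormalPDF (x - β * t))) ^ (1/β) := by
        congr 1
        · congr 1
          refine lintegral_congr fun x => ?_
          show ENNReal.ofReal (p x * stdNormalPDF x ^ (-(1/β))) ^ α = _
          rw [ENNReal.ofReal_rpow_of_nonneg
            (mul_nonneg (hp x) (Real.rpow_nonneg (stdNormalPDF_pos x).le _))
            (by positivity), g_rpow_alpha hα hβ p hp x]
        · congr 1
          refine lintegral_congr fun x => ?_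
          show (ENNReal.ofReal (stdNormalPDF (x - β * t)) ^ (1/β)) ^ β = _
          rw [← ENNReal.rpow_mul, one_div, inv_mul_cancel₀ hβ0.ne', ENNReal.rpow_one]

lemma lintegral_stdNormalPDF_shift (a : ℝ) :
    ∫⁻ x, ENNReal.ofReal (stdNormalPDF (x - a)) = 1 := by
  have h : ∀ x, stdNormalPDF (x - a) = gaussianPDFReal a 1 x := by
    intro x
    rw [stdNormalPDF_eq, gaussianPDFReal_sub, zero_add]
  simp_rw [h]
  exact lintegral_gaussianPDFReal_eq_one a one_ne_zero

lemma compact_part_bound {M T : ℝ} (hM : 0 ≤ M) (hMT : M ≤ |T|) :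
    ∫⁻ x in Set.Icc (-M) M, ENNReal.ofReal (stdNormalPDF (x - T))
      ≤ ENNReal.ofReal
          (2 * M * ((Real.sqrt (2 * Real.pi))⁻¹ * Real.exp (-(|T| - M) ^ 2 / 2))) := by
  set C : ℝ := (Real.sqrt (2 * Real.pi))⁻¹ * Real.exp (-(|T| - M) ^ 2 / 2) with hC
  have hC0 : 0 ≤ C := by positivity
  have hb : ∀ x ∈ Set.Icc (-M) M,
      ENNReal.ofReal (stdNormalPDF (x - T)) ≤ ENNReal.ofReal C := by
    intro x hx
    apply ENNReal.ofReal_le_ofReal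
    have hxM : |x| ≤ M := abs_le.2 ⟨hx.1, hx.2⟩
    have h1 : |T| - M ≤ |x - T| := by
      have h2 := abs_sub_abs_le_abs_sub T x
      rw [abs_sub_comm] at h2
      linarith
    have h2 : (|T| - M) ^ 2 ≤ (x - T) ^ 2 := by
      rw [← sq_abs (x - T)]
      exact pow_le_pow_left₀ (by linarith) h1 2
    have h3 : Real.exp (-(x - T) ^ 2 / 2) ≤ Real.exp (-(|T| - M) ^ 2 / 2) :=
      Real.exp_le_exp.2 (by linarith)
    exact mul_le_mul_of_nonneg_left h3 (by positivity)
  calc ∫⁻ x in Set.Icc (-M) M, ENNReal.ofReal (stdNormalPDF (x - T))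
      ≤ ∫⁻ _ in Set.Icc (-M) M, ENNReal.ofReal C := setLIntegral_mono measurable_const hb
    _ = ENNReal.ofReal C * volume (Set.Icc (-M) M) := setLIntegral_const _ _
    _ = ENNReal.ofReal C * ENNReal.ofReal (2 * M) := by
        rw [Real.volume_Icc, show M - -M = 2 * M by ring]
    _ = ENNReal.ofReal (2 * M * C) := by
        rw [← ENNReal.ofReal_mul hC0, mul_comm]

lemma tail_small {h : ℝ → ℝ≥0∞} (hm : Measurable h) (hfin : ∫⁻ x, h x ≠ ⊤) {δ : ℝ≥0∞}
    (hδ : 0 < δ) : ∃ N : ℕ, ∫⁻ x in (Set.Icc (-(N : ℝ)) N)ᶜ, h x < δ := by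
  set ν := volume.withDensity h with hν
  have happ : ∀ (n : ℕ), ν (Set.Icc (-(n : ℝ)) n)ᶜ = ∫⁻ x in (Set.Icc (-(n : ℝ)) n)ᶜ, h x :=
    fun n => withDensity_apply h measurableSet_Icc.compl
  have huniv : ν Set.univ ≠ ⊤ := by
    rw [hν, withDensity_apply h MeasurableSet.univ, Measure.restrict_univ]
    exact hfin
  have hmono : Antitone fun n : ℕ => (Set.Icc (-(n : ℝ)) n)ᶜ := by
    intro m n hmn
    apply Set.compl_subset_compl.2
    exact Set.Icc_subset_Icc (neg_le_neg (Nat.cast_le.2 hmn)) (Nat.cast_le.2 hmn)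
  have hinter : ⋂ n : ℕ, (Set.Icc (-(n : ℝ)) n)ᶜ = ∅ := by
    ext x
    simp only [Set.mem_iInter, Set.mem_compl_iff, Set.mem_Icc, Set.mem_empty_iff_false,
      iff_false, not_forall, not_not]
    obtain ⟨n, hn⟩ := exists_nat_ge |x|
    exact ⟨n, (abs_le.1 hn).1, (abs_le.1 hn).2⟩
  have htend := tendsto_measure_iInter_atTop (μ := ν)
    (fun n : ℕ => measurableSet_Icc.compl.nullMeasurableSet) hmono
    ⟨0, ne_top_of_le_ne_top huniv (measure_mono (Set.subset_univ _))⟩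
  rw [hinter, measure_empty] at htend
  obtain ⟨N, hN⟩ := (htend.eventually_lt_const hδ).exists
  exact ⟨N, by rwa [Function.comp_apply, happ] at hN⟩

/-- If `X` has density `p` with `∫ p^α / φ^{α-1} < ∞` (`α > 1`, `β = α/(α-1)`),
then `E e^{tX} e^{-β t²/2} → 0` as `|t| → ∞`. -/
theorem mgf_subgaussian_decay (α β : ℝ) (hα : 1 < α) (hβ : β = α / (α - 1))
    (p : ℝ → ℝ) (hpm : Measurable p) (hp : ∀ x, 0 ≤ p x) (hdens : (∫ x, p x) = 1)
    (hfin : Integrable (fun x => p x ^ α / stdNormalPDF x ^ (α - 1))) :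
    Tendsto (fun t : ℝ => (∫ x, Real.exp (t * x) * p x) * Real.exp (-β * t ^ 2 / 2))
      (cocompact ℝ) (nhds 0) := by
  have hpq : α.HolderConjugate β := (Real.holderConjugate_iff_eq_conjExponent hα).2 hβ
  have hβ0 : 0 < β := hpq.symm.pos
  have hα0 : (0:ℝ) < 1 / α := by positivity
  have hβi : (0:ℝ) < 1 / β := by positivity
  set h : ℝ → ℝ≥0∞ := fun x => ENNReal.ofReal (p x ^ α / stdNormalPDF x ^ (α - 1)) with hh
  have hhm : Measurable h := by
    apply Measurable.ennreal_ofReal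
    have hm2 : Measurable fun y : ℝ => y ^ α := by measurability
    have hm3 : Measurable fun y : ℝ => y ^ (α - 1) := by measurability
    exact (hm2.comp hpm).div (hm3.comp measurable_stdNormalPDF)
  set Ctot : ℝ≥0∞ := ∫⁻ x, h x with hCtot
  have hCfin : Ctot ≠ ⊤ := hfin.lintegral_lt_top.ne
  have hKfin : Ctot ^ (1/α) ≠ ⊤ := ENNReal.rpow_ne_top_of_nonneg hα0.le hCfin
  set I : ℝ → ℝ≥0∞ := fun t =>
    ∫⁻ x, ENNReal.ofReal (Real.exp (t * x) * p x * Real.exp (-β * t ^ 2 / 2)) with hI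
  have hrepr : ∀ t, (∫ x, Real.exp (t * x) * p x) * Real.exp (-β * t ^ 2 / 2)
      = (I t).toReal := by
    intro t
    have hmeas : AEStronglyMeasurable (fun x => Real.exp (t * x) * p x) volume :=
      ((Real.measurable_exp.comp (measurable_id.const_mul t)).mul hpm).aestronglyMeasurable
    rw [integral_eq_lintegral_of_nonneg_ae
      (ae_of_all _ fun x => mul_nonneg (Real.exp_pos _).le (hp x)) hmeas, hI]
    have heq : ∀ x, ENNReal.ofReal (Real.exp (t * x) * p x * Real.exp (-β * t ^ 2 / 2))
        = ENNReal.ofReal (Real.exp (t * x) * p x) * ENNReal.ofReal (Real.exp (-β * t ^ 2 / 2)) :=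
      fun x => ENNReal.ofReal_mul (mul_nonneg (Real.exp_pos _).le (hp x))
    simp_rw [heq]
    have hm4 : Measurable fun x : ℝ => ENNReal.ofReal (Real.exp (t * x) * p x) := by
      apply Measurable.ennreal_ofReal
      exact (Real.measurable_exp.comp (measurable_id.const_mul t)).mul hpm
    rw [lintegral_mul_const _ hm4, ENNReal.toReal_mul,
      ENNReal.toReal_ofReal (Real.exp_pos _).le]
  have hbound : ∀ (N : ℕ) (t : ℝ), (N : ℝ) ≤ |β * t| →
      I t ≤ (∫⁻ x in (Set.Icc (-(N:ℝ)) N)ᶜ, h x) ^ (1/α)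
        + Ctot ^ (1/α) * ENNReal.ofReal
            ((2 * N * ((Real.sqrt (2 * Real.pi))⁻¹
              * Real.exp (-(|β * t| - N) ^ 2 / 2))) ^ (1/β)) := by
    intro N t hNt
    calc I t = (∫⁻ x in Set.Icc (-(N:ℝ)) N,
            ENNReal.ofReal (Real.exp (t * x) * p x * Real.exp (-β * t ^ 2 / 2)))
          + ∫⁻ x in (Set.Icc (-(N:ℝ)) N)ᶜ,
            ENNReal.ofReal (Real.exp (t * x) * p x * Real.exp (-β * t ^ 2 / 2)) :=
        (lintegral_add_compl _ measurableSet_Icc).symm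
      _ ≤ Ctot ^ (1/α) * ENNReal.ofReal
            ((2 * N * ((Real.sqrt (2 * Real.pi))⁻¹
              * Real.exp (-(|β * t| - N) ^ 2 / 2))) ^ (1/β))
          + (∫⁻ x in (Set.Icc (-(N:ℝ)) N)ᶜ, h x) ^ (1/α) := by
        apply add_le_add
        · refine (holder_bound hα hβ p hpm hp t _).trans ?_
          refine mul_le_mul' (ENNReal.rpow_le_rpow (setLIntegral_le_lintegral _ _) hα0.le) ?_
          rw [← ENNReal.ofReal_rpow_of_nonneg (by positivity) hβi.le]
          exact ENNReal.rpow_le_rpow (compact_part_bound (Nat.cast_nonneg N) hNt) hβi.le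
        · refine (holder_bound hα hβ p hpm hp t _).trans ?_
          have h2 : (∫⁻ x in (Set.Icc (-(N:ℝ)) N)ᶜ,
              ENNReal.ofReal (stdNormalPDF (x - β * t))) ^ (1/β) ≤ 1 := by
            rw [show (1:ℝ≥0∞) = 1 ^ (1/β) by rw [ENNReal.one_rpow]]
            refine ENNReal.rpow_le_rpow ?_ hβi.le
            rw [← lintegral_stdNormalPDF_shift (β * t)]
            exact setLIntegral_le_lintegral _ _
          calc (∫⁻ x in (Set.Icc (-(N:ℝ)) N)ᶜ, h x) ^ (1/α)
              * (∫⁻ x in (Set.Icc (-(N:ℝ)) N)ᶜ,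
                ENNReal.ofReal (stdNormalPDF (x - β * t))) ^ (1/β)
              ≤ (∫⁻ x in (Set.Icc (-(N:ℝ)) N)ᶜ, h x) ^ (1/α) * 1 := mul_le_mul' le_rfl h2
            _ = (∫⁻ x in (Set.Icc (-(N:ℝ)) N)ᶜ, h x) ^ (1/α) := mul_one _
      _ = (∫⁻ x in (Set.Icc (-(N:ℝ)) N)ᶜ, h x) ^ (1/α)
          + Ctot ^ (1/α) * ENNReal.ofReal
            ((2 * N * ((Real.sqrt (2 * Real.pi))⁻¹
              * Real.exp (-(|β * t| - N) ^ 2 / 2))) ^ (1/β)) := add_comm _ _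
  have habs : Tendsto (fun t : ℝ => |β * t|) (cocompact ℝ) atTop := by
    have h1 : Tendsto (fun t : ℝ => |β| * ‖t‖) (cocompact ℝ) atTop :=
      tendsto_norm_cocompact_atTop.const_mul_atTop (abs_pos.2 hβ0.ne')
    refine h1.congr fun t => ?_
    rw [Real.norm_eq_abs, ← abs_mul]
  have hexp : ∀ N : ℕ, Tendsto (fun t : ℝ => Real.exp (-(|β * t| - N) ^ 2 / 2))
      (cocompact ℝ) (𝓝 0) := by
    intro N
    have h2 : Tendsto (fun t : ℝ => (|β * t| + -(N:ℝ)) ^ 2 / 2) (cocompact ℝ) atTop :=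
      ((tendsto_pow_atTop two_ne_zero).comp
        (tendsto_atTop_add_const_right _ (-(N:ℝ)) habs)).atTop_div_const two_pos
    have h3 := Real.tendsto_exp_neg_atTop_nhds_zero.comp h2
    refine h3.congr fun t => ?_
    simp only [Function.comp_apply]
    rw [show -((|β * t| + -(N:ℝ)) ^ 2 / 2) = -(|β * t| - (N:ℝ)) ^ 2 / 2 by ring]
  have hsecond : ∀ N : ℕ, Tendsto (fun t : ℝ => Ctot ^ (1/α) * ENNReal.ofReal
      ((2 * N * ((Real.sqrt (2 * Real.pi))⁻¹
        * Real.exp (-(|β * t| - N) ^ 2 / 2))) ^ (1/β))) (cocompact ℝ) (𝓝 0) := by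
    intro N
    have h4 : Tendsto (fun t : ℝ => 2 * (N:ℝ) * ((Real.sqrt (2 * Real.pi))⁻¹
        * Real.exp (-(|β * t| - N) ^ 2 / 2))) (cocompact ℝ) (𝓝 0) := by
      have h5 := (((hexp N).const_mul ((Real.sqrt (2 * Real.pi))⁻¹)).const_mul (2 * (N:ℝ)))
      simpa using h5
    have h5 := h4.rpow_const (Or.inr hβi.le)
    rw [Real.zero_rpow hβi.ne'] at h5
    have h6 := ENNReal.tendsto_ofReal h5
    rw [ENNReal.ofReal_zero] at h6
    have h7 := ENNReal.Tendsto.const_mul h6 (Or.inr hKfin)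
    rwa [mul_zero] at h7
  rw [NormedAddCommGroup.tendsto_nhds_zero]
  intro ε hε
  have hε2 : (0:ℝ≥0∞) < ENNReal.ofReal ε / 2 :=
    ENNReal.div_pos (ENNReal.ofReal_pos.2 hε).ne' (by simp)
  have hε2top : (ENNReal.ofReal ε / 2) ≠ ⊤ :=
    (ENNReal.div_lt_top ENNReal.ofReal_ne_top (by norm_num)).ne
  have hδ : (0:ℝ≥0∞) < (ENNReal.ofReal ε / 2) ^ α := ENNReal.rpow_pos hε2 hε2top
  obtain ⟨N, hN⟩ := tail_small hhm hCfin hδ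
  have hN' : (∫⁻ x in (Set.Icc (-(N:ℝ)) N)ᶜ, h x) ^ (1/α) < ENNReal.ofReal ε / 2 := by
    have h8 := ENNReal.rpow_lt_rpow hN hα0
    have h9 : ((ENNReal.ofReal ε / 2) ^ α) ^ (1/α) = ENNReal.ofReal ε / 2 := by
      rw [one_div, ENNReal.rpow_rpow_inv (by positivity : α ≠ 0)]
    rwa [h9] at h8
  have hev1 : ∀ᶠ t in cocompact ℝ, (N : ℝ) ≤ |β * t| := habs.eventually_ge_atTop _
  have hev2 := (hsecond N).eventually_lt_const hε2
  filter_upwards [hev1, hev2] with t h1 h2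
  rw [hrepr t, Real.norm_of_nonneg ENNReal.toReal_nonneg]
  apply ENNReal.toReal_lt_of_lt_ofReal
  calc I t ≤ (∫⁻ x in (Set.Icc (-(N:ℝ)) N)ᶜ, h x) ^ (1/α)
        + Ctot ^ (1/α) * ENNReal.ofReal
            ((2 * N * ((Real.sqrt (2 * Real.pi))⁻¹
              * Real.exp (-(|β * t| - N) ^ 2 / 2))) ^ (1/β)) := hbound N t h1
    _ < ENNReal.ofReal ε / 2 + ENNReal.ofReal ε / 2 := ENNReal.add_lt_add hN' h2
    _ = ENNReal.ofReal ε := ENNReal.add_halves _
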